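/- Let $p > 1$. There exist constants $C_1, C_2 > 0$ depending only on $p$ such that $|a-b|^{p-2}(a-b)\left(\frac{c^p}{a^{p-1}} - \frac{d^p}{b^{p-1}}\right) + C_1 \left|\frac{a-b}{a+b}\right|^p (c^p + d^p) \le C_2 |c-d|^p$ for all $a, b > 0$ and $c, d \ge 0$. -/

import Mathlib

open Real
set_option maxHeartbeats 1000000

/-- tangent-line (Young) inequality: `r*x ≤ x^r + (r-1)` for `r > 1`, `x ≥ 0`. -/
lemma young1 {r : ℝ} (hr : 1 < r) {x : ℝ} (hx : 0 ≤ x) :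
    r * x ≤ x ^ r + (r - 1) := by
  have hq : r.HolderConjugate (r / (r - 1)) := Real.HolderConjugate.conjExponent hr
  have h := Real.young_inequality_of_nonneg hx zero_le_one hq
  rw [mul_one, Real.one_rpow] at h
  have hr0 : 0 < r := by linarith
  have hr1 : 0 < r - 1 := by linarith
  have h2 : (1 : ℝ) / (r / (r - 1)) = (r - 1) / r := by
    field_simp
  rw [div_eq_mul_inv (1:ℝ), one_mul] at h
  have h3 : (r / (r - 1))⁻¹ = (r - 1) / r := by
    rw [inv_div]
  rw [h3] at h
  have := mul_le_mul_of_nonneg_left h hr0.le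
  calc r * x ≤ r * (x ^ r / r + (r - 1) / r) := this
    _ = x ^ r + (r - 1) := by field_simp

/-- `x^(p-1) * y ≤ x^p + y^p`. -/
lemma rp_aux1 {p : ℝ} (hp : 1 < p) {x y : ℝ} (hx : 0 ≤ x) (hy : 0 ≤ y) :
    x ^ (p - 1) * y ≤ x ^ p + y ^ p := by
  have hp1 : (0:ℝ) ≤ p - 1 := by linarith
  rcases le_total x y with h | h
  · have h1 : x ^ (p-1) * y ≤ y ^ (p-1) * y :=
      mul_le_mul_of_nonneg_right (Real.rpow_le_rpow hx h hp1) hy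
    have h2 : y ^ (p-1) * y ≤ y ^ p := by
      rcases eq_or_lt_of_le hy with h0 | h0
      · rw [← h0]
        rw [Real.zero_rpow (by linarith : p - 1 ≠ 0), Real.zero_rpow (by linarith : p ≠ 0)]
        simp
      · rw [← Real.rpow_add_one h0.ne' (p-1)]
        rw [show p - 1 + 1 = p by ring]
    have : (0:ℝ) ≤ x ^ p := Real.rpow_nonneg hx p
    linarith
  · have h1 : x ^ (p-1) * y ≤ x ^ (p-1) * x :=
      mul_le_mul_of_nonneg_left h (Real.rpow_nonneg hx _)
    have h2 : x ^ (p-1) * x ≤ x ^ p := by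
      rcases eq_or_lt_of_le hx with h0 | h0
      · rw [← h0]
        rw [Real.zero_rpow (by linarith : p - 1 ≠ 0), Real.zero_rpow (by linarith : p ≠ 0)]
        simp
      · rw [← Real.rpow_add_one h0.ne' (p-1)]
        rw [show p - 1 + 1 = p by ring]
    have : (0:ℝ) ≤ y ^ p := Real.rpow_nonneg hy p
    linarith

/-- weighted version: `x^(p-1)*y ≤ ε*x^p + ε^(1-p)*y^p`. -/
lemma rp_aux2 {p : ℝ} (hp : 1 < p) {x y ε : ℝ} (hx : 0 ≤ x) (hy : 0 ≤ y) (hε : 0 < ε) :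
    x ^ (p - 1) * y ≤ ε * x ^ p + ε ^ (1 - p) * y ^ p := by
  have hp0 : p ≠ 0 := by positivity
  have hu : (0:ℝ) ≤ ε ^ (1/p) * x := mul_nonneg (Real.rpow_nonneg hε.le _) hx
  have hv : (0:ℝ) ≤ ε ^ ((1-p)/p) * y := mul_nonneg (Real.rpow_nonneg hε.le _) hy
  have key := rp_aux1 hp hu hv
  have e1 : (ε ^ (1/p) * x) ^ (p - 1) = ε ^ ((p-1)/p) * x ^ (p-1) := by
    rw [Real.mul_rpow (Real.rpow_nonneg hε.le _) hx, ← Real.rpow_mul hε.le]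
    congr 1
    ring
  have e2 : (ε ^ (1/p) * x) ^ p = ε * x ^ p := by
    rw [Real.mul_rpow (Real.rpow_nonneg hε.le _) hx, ← Real.rpow_mul hε.le]
    rw [show 1/p*p = 1 by field_simp, Real.rpow_one]
  have e3 : (ε ^ ((1-p)/p) * y) ^ p = ε ^ (1-p) * y ^ p := by
    rw [Real.mul_rpow (Real.rpow_nonneg hε.le _) hy, ← Real.rpow_mul hε.le]
    rw [show (1-p)/p*p = 1-p by field_simp]
  have e0 : ε ^ ((p-1)/p) * ε ^ ((1-p)/p) = 1 := by
    rw [← Real.rpow_add hε, show (p-1)/p + (1-p)/p = 0 by ring, Real.rpow_zero]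
  rw [e1, e2, e3] at key
  calc x ^ (p-1) * y = (ε ^ ((p-1)/p) * ε ^ ((1-p)/p)) * (x ^ (p-1) * y) := by
        rw [e0, one_mul]
    _ = ε ^ ((p-1)/p) * x ^ (p-1) * (ε ^ ((1-p)/p) * y) := by ring
    _ ≤ ε * x ^ p + ε ^ (1-p) * y ^ p := key

/-- convexity bound: `M^p - m^p ≤ p*M^(p-1)*(M-m)` for `0 ≤ m ≤ M`. -/
lemma rp_aux3 {p : ℝ} (hp : 1 < p) {m M : ℝ} (hm : 0 ≤ m) (hmM : m ≤ M) :
    M ^ p - m ^ p ≤ p * M ^ (p - 1) * (M - m) := by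
  rcases eq_or_lt_of_le (hm.trans hmM) with hM | hM
  · have hm0 : m = 0 := le_antisymm (hM ▸ hmM) hm
    rw [← hM, hm0, Real.zero_rpow (by linarith : p ≠ 0)]
    simp
  · have hy := young1 hp (x := m / M) (by positivity)
    have e1 : (m / M) ^ p = m ^ p / M ^ p := Real.div_rpow hm hM.le p
    rw [e1] at hy
    have hMp : (0:ℝ) < M ^ p := Real.rpow_pos_of_pos hM p
    have hMp1 : M ^ p = M ^ (p-1) * M := by
      rw [← Real.rpow_add_one hM.ne' (p-1), show p - 1 + 1 = p by ring]
    have h2 := mul_le_mul_of_nonneg_right hy hMp.le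
    rw [add_mul, div_mul_cancel₀ _ hMp.ne'] at h2
    have e2 : p * (m / M) * M ^ p = p * M ^ (p-1) * m := by
      rw [hMp1]; field_simp
    rw [e2] at h2
    nlinarith [h2]

/-- Bernoulli-type: `1 + (p-1)*(1-s) ≤ (s^(p-1))⁻¹` for `0 < s`. -/
lemma rp_aux4 {p : ℝ} (hp : 1 < p) {s : ℝ} (hs : 0 < s) :
    1 + (p - 1) * (1 - s) ≤ (s ^ (p - 1))⁻¹ := by
  have hsp : (0:ℝ) < s ^ (p - 1) := Real.rpow_pos_of_pos hs _
  rw [inv_eq_one_div, le_div_iff₀ hsp]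
  have hss : s ^ (p-1) * s = s ^ p := by
    rw [← Real.rpow_add_one hs.ne' (p-1), show p - 1 + 1 = p by ring]
  have hy := young1 (r := p/(p-1)) (x := s ^ (p-1))
    (by rw [lt_div_iff₀ (by linarith : (0:ℝ) < p - 1)]; linarith) (Real.rpow_nonneg hs.le _)
  have hp1 : (0:ℝ) < p - 1 := by linarith
  have e1 : (s ^ (p-1)) ^ (p/(p-1)) = s ^ p := by
    rw [← Real.rpow_mul hs.le]
    congr 1
    rw [mul_comm, div_mul_cancel₀ _ hp1.ne']
  rw [e1] at hy
  have h2 := mul_le_mul_of_nonneg_left hy hp1.le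
  have key0 : (p - 1) * (p / (p - 1)) = p := by
    rw [mul_comm, div_mul_cancel₀ _ hp1.ne']
  have e2 : (p - 1) * (p / (p-1) * s ^ (p-1)) = p * s ^ (p-1) := by
    rw [← mul_assoc, key0]
  have e3 : (p - 1) * (s ^ p + (p / (p-1) - 1)) = (p-1) * s ^ p + 1 := by
    rw [mul_add, mul_sub, mul_one, key0]
    ring
  rw [e2, e3] at h2
  have e4 : (1 + (p - 1) * (1 - s)) * s ^ (p-1) = p * s ^ (p-1) - (p-1) * s ^ p := by
    rw [← hss]; ring
  rw [e4]
  linarith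

noncomputable def picA (p : ℝ) : ℝ := p * (4:ℝ) ^ (p - 1)
noncomputable def picEps (p : ℝ) : ℝ := (p - 1) / (2 * picA p)
noncomputable def picC1 (p : ℝ) : ℝ := (p - 1) / (2 * (1 + (2:ℝ) ^ p))
noncomputable def picC2 (p : ℝ) : ℝ :=
  (2:ℝ) ^ p + (p - 1) / 2 + picA p * (picEps p) ^ (1 - p)

lemma picA_pos {p : ℝ} (hp : 1 < p) : 0 < picA p := by
  have h4 : (0:ℝ) < (4:ℝ) ^ (p-1) := Real.rpow_pos_of_pos (by norm_num) _
  have hp0 : (0:ℝ) < p := by linarith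
  exact mul_pos hp0 h4

lemma picEps_pos {p : ℝ} (hp : 1 < p) : 0 < picEps p :=
  div_pos (by linarith) (by linarith [picA_pos hp])

lemma two_rpow_pos (p : ℝ) : (0:ℝ) < (2:ℝ) ^ p := Real.rpow_pos_of_pos (by norm_num) _

lemma picC1_pos {p : ℝ} (hp : 1 < p) : 0 < picC1 p :=
  div_pos (by linarith) (by linarith [two_rpow_pos p])

lemma picC2_pos {p : ℝ} (hp : 1 < p) : 0 < picC2 p := by
  have h1 := two_rpow_pos p
  have h2 : 0 < picA p * (picEps p) ^ (1-p) :=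
    mul_pos (picA_pos hp) (Real.rpow_pos_of_pos (picEps_pos hp) _)
  unfold picC2
  linarith

lemma picC1_id {p : ℝ} (hp : 1 < p) : picC1 p * (1 + (2:ℝ)^p) = (p - 1) / 2 := by
  have h1 : (1 + (2:ℝ)^p) ≠ 0 := by linarith [two_rpow_pos p]
  unfold picC1
  field_simp

lemma picA_eps {p : ℝ} (hp : 1 < p) : picA p * picEps p = (p - 1) / 2 := by
  have hA := picA_pos hp
  unfold picEps
  field_simp

/-- The core scalar estimate. -/
lemma picone_core {p : ℝ} (hp : 1 < p) {t q m M : ℝ} (ht0 : 0 < t) (ht1 : t ≤ 1)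
    (htq : t ≤ q) (hq1 : q ≤ 1) (hq2t : q ≤ 2*t) (hm0 : 0 ≤ m) (hmM : m ≤ M) :
    -((p-1) * (t^p * m^p)) + q^(p-1) * (M^p - m^p) + picC1 p * t^p * (m^p + M^p)
      ≤ picC2 p * (M-m)^p := by
  have hp1 : (0:ℝ) < p - 1 := by linarith
  have hq0 : 0 < q := lt_of_lt_of_le ht0 htq
  have hδ0 : (0:ℝ) ≤ M - m := by linarith
  have hM0 : (0:ℝ) ≤ M := hm0.trans hmM
  have hδp : (0:ℝ) ≤ (M-m)^p := Real.rpow_nonneg hδ0 _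
  have hmp : (0:ℝ) ≤ m^p := Real.rpow_nonneg hm0 _
  have hMp : (0:ℝ) ≤ M^p := Real.rpow_nonneg hM0 _
  have htp : (0:ℝ) ≤ t^p := Real.rpow_nonneg ht0.le _
  have hMm : m^p ≤ M^p := Real.rpow_le_rpow hm0 hmM (by linarith)
  have hR : (0:ℝ) ≤ picA p * (picEps p)^(1-p) :=
    (mul_pos (picA_pos hp) (Real.rpow_pos_of_pos (picEps_pos hp) _)).le
  have eC2 : picC2 p = (2:ℝ)^p + (p-1)/2 + picA p * (picEps p)^(1-p) := rfl
  have hf3 : (0:ℝ) ≤ (p-1) * (t^p * m^p) := by positivity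
  rcases le_or_gt (2*m) M with hfar | hnear
  · -- far case
    have hmδ : m ≤ M - m := by linarith
    have hM2δ : M ≤ 2*(M-m) := by linarith
    have b1 : q^(p-1) ≤ 1 := Real.rpow_le_one hq0.le hq1 (by linarith)
    have b2 : t^p ≤ 1 := Real.rpow_le_one ht0.le ht1 (by linarith)
    have b3 : m^p ≤ (M-m)^p := Real.rpow_le_rpow hm0 hmδ (by linarith)
    have b4 : M^p ≤ 2^p * (M-m)^p := by
      calc M^p ≤ (2*(M-m))^p := Real.rpow_le_rpow hM0 hM2δ (by linarith)
        _ = 2^p * (M-m)^p := Real.mul_rpow (by norm_num) hδ0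
    have f1 : q^(p-1) * (M^p - m^p) ≤ 2^p * (M-m)^p := by
      have := mul_le_of_le_one_left (by linarith : (0:ℝ) ≤ M^p - m^p) b1
      linarith
    have f2 : picC1 p * t^p * (m^p + M^p) ≤ (p-1)/2 * (M-m)^p := by
      have s1 : picC1 p * t^p ≤ picC1 p := by
        nlinarith [picC1_pos hp, b2, htp]
      have s3 : m^p + M^p ≤ (1 + 2^p) * (M-m)^p := by nlinarith [b3, b4]
      calc picC1 p * t^p * (m^p + M^p) ≤ picC1 p * (m^p + M^p) :=
            mul_le_mul_of_nonneg_right s1 (by linarith)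
        _ ≤ picC1 p * ((1 + 2^p) * (M-m)^p) :=
            mul_le_mul_of_nonneg_left s3 (picC1_pos hp).le
        _ = (p-1)/2 * (M-m)^p := by rw [← mul_assoc, picC1_id hp]
    have hRδ : 0 ≤ picA p * (picEps p)^(1-p) * (M-m)^p := mul_nonneg hR hδp
    rw [eC2]
    nlinarith [f1, f2, hf3, hRδ]
  · -- near case
    have hm0' : (0:ℝ) < m := by linarith
    have n1 : M^p ≤ 2^p * m^p := by
      calc M^p ≤ (2*m)^p := Real.rpow_le_rpow hM0 hnear.le (by linarith)
        _ = 2^p * m^p := Real.mul_rpow (by norm_num) hm0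
    have n2 : M^(p-1) ≤ 2^(p-1) * m^(p-1) := by
      calc M^(p-1) ≤ (2*m)^(p-1) := Real.rpow_le_rpow hM0 hnear.le (by linarith)
        _ = 2^(p-1) * m^(p-1) := Real.mul_rpow (by norm_num) hm0
    have n3 := rp_aux3 hp hm0 hmM
    have n4 : q^(p-1) ≤ 2^(p-1) * t^(p-1) := by
      calc q^(p-1) ≤ (2*t)^(p-1) := Real.rpow_le_rpow hq0.le hq2t (by linarith)
        _ = 2^(p-1) * t^(p-1) := Real.mul_rpow (by norm_num) ht0.le
    have htp1 : (0:ℝ) ≤ t^(p-1) := Real.rpow_nonneg ht0.le _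
    have hmp1 : (0:ℝ) ≤ m^(p-1) := Real.rpow_nonneg hm0 _
    have hMp1 : (0:ℝ) ≤ M^(p-1) := Real.rpow_nonneg hM0 _
    have h2p1 : (0:ℝ) < (2:ℝ)^(p-1) := Real.rpow_pos_of_pos (by norm_num) _
    have n5 : q^(p-1) * (M^p - m^p) ≤ (2^(p-1)*t^(p-1)) * (p * (2^(p-1)*m^(p-1)) * (M-m)) := by
      have i1 : q^(p-1) * (M^p - m^p) ≤ q^(p-1) * (p * M^(p-1) * (M-m)) :=
        mul_le_mul_of_nonneg_left n3 (Real.rpow_nonneg hq0.le _)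
      have i2 : p * M^(p-1) * (M-m) ≤ p * (2^(p-1)*m^(p-1)) * (M-m) := by
        apply mul_le_mul_of_nonneg_right _ hδ0
        apply mul_le_mul_of_nonneg_left n2 (by linarith)
      have i3 : q^(p-1) * (p * M^(p-1) * (M-m)) ≤ (2^(p-1)*t^(p-1)) * (p * (2^(p-1)*m^(p-1)) * (M-m)) := by
        apply mul_le_mul n4 i2 (by positivity) (by positivity)
      linarith
    have n7 : (2^(p-1)*t^(p-1)) * (p * (2^(p-1)*m^(p-1)) * (M-m))
        = picA p * ((t*m)^(p-1) * (M-m)) := by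
      have e1 : (t*m)^(p-1) = t^(p-1) * m^(p-1) := Real.mul_rpow ht0.le hm0
      have e2 : (4:ℝ)^(p-1) = 2^(p-1) * 2^(p-1) := by
        rw [show (4:ℝ) = 2*2 by norm_num, Real.mul_rpow] <;> norm_num
      rw [e1]; unfold picA; rw [e2]; ring
    have n8 : picA p * ((t*m)^(p-1) * (M-m))
        ≤ picA p * (picEps p * (t*m)^p + (picEps p)^(1-p) * (M-m)^p) :=
      mul_le_mul_of_nonneg_left
        (rp_aux2 hp (mul_nonneg ht0.le hm0) hδ0 (picEps_pos hp)) (picA_pos hp).le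
    have n10 : (t*m)^p = t^p * m^p := Real.mul_rpow ht0.le hm0
    have n14 : picA p * (picEps p * (t*m)^p + (picEps p)^(1-p) * (M-m)^p)
        = (p-1)/2 * (t^p*m^p) + picA p * (picEps p)^(1-p) * (M-m)^p := by
      rw [n10, mul_add, ← mul_assoc, picA_eps hp]; ring
    have nQ : q^(p-1) * (M^p - m^p)
        ≤ (p-1)/2 * (t^p*m^p) + picA p * (picEps p)^(1-p) * (M-m)^p := by
      rw [n7] at n5
      rw [← n14]; linarith [n5, n8]
    have n12 : picC1 p * t^p * (m^p + M^p) ≤ (p-1)/2 * (t^p*m^p) := by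
      have s3 : m^p + M^p ≤ (1 + 2^p) * m^p := by nlinarith [n1]
      calc picC1 p * t^p * (m^p + M^p) ≤ picC1 p * t^p * ((1 + 2^p) * m^p) :=
            mul_le_mul_of_nonneg_left s3 (mul_nonneg (picC1_pos hp).le htp)
        _ = (picC1 p * (1 + 2^p)) * (t^p * m^p) := by ring
        _ = (p-1)/2 * (t^p*m^p) := by rw [picC1_id hp]
    have h2pδ : (0:ℝ) ≤ (2:ℝ)^p * (M-m)^p := mul_nonneg (two_rpow_pos p).le hδp
    have hhalf : (0:ℝ) ≤ (p-1)/2 * (M-m)^p := mul_nonneg (by linarith) hδp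
    rw [eC2]
    nlinarith [nQ, n12, h2pδ, hhalf]

lemma picone_key {p : ℝ} (hp : 1 < p) {a b c d : ℝ} (ha : 0 < a) (hb : 0 < b)
    (hc : 0 ≤ c) (hd : 0 ≤ d) (hba : b ≤ a) :
    |a - b| ^ (p - 2) * (a - b) * (c ^ p / a ^ (p - 1) - d ^ p / b ^ (p - 1)) +
      picC1 p * |(a - b) / (a + b)| ^ p * (c ^ p + d ^ p) ≤ picC2 p * |c - d| ^ p := by
  have hp1 : (0:ℝ) < p - 1 := by linarith
  rcases eq_or_lt_of_le hba with heq | hlt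
  · -- a = b : everything on the left vanishes
    have e : a - b = 0 := by rw [heq]; ring
    rw [e]
    simp only [abs_zero, zero_div, mul_zero, zero_mul, add_zero, zero_add,
      Real.zero_rpow (show p ≠ 0 by linarith)]
    exact mul_nonneg (picC2_pos hp).le (Real.rpow_nonneg (abs_nonneg _) _)
  · have hab : 0 < a - b := sub_pos.mpr hlt
    have hab' : 0 < a + b := by linarith
    have hm0 : 0 ≤ min c d := le_min hc hd
    have hmM : min c d ≤ max c d := min_le_max
    have hsum : c ^ p + d ^ p = (min c d) ^ p + (max c d) ^ p := by
      rcases le_total c d with h | h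
      · rw [min_eq_left h, max_eq_right h]
      · rw [min_eq_right h, max_eq_left h]; ring
    have habs : |c - d| = max c d - min c d := by
      rw [abs_sub_comm]; exact (max_sub_min_eq_abs c d).symm
    have eT : |a - b| ^ (p - 2) * (a - b) = (a - b) ^ (p - 1) := by
      rw [abs_of_pos hab, show p - 1 = (p - 2) + 1 by ring, Real.rpow_add_one hab.ne']
    have eAbs : |(a - b) / (a + b)| = (a - b) / (a + b) := abs_of_pos (div_pos hab hab')
    have ht0 : 0 < (a - b) / (a + b) := div_pos hab hab'
    have ht1 : (a - b) / (a + b) ≤ 1 := by rw [div_le_one hab']; linarith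
    have hq0 : 0 < (a - b) / a := div_pos hab ha
    have hq1 : (a - b) / a ≤ 1 := by rw [div_le_one ha]; linarith
    have htq : (a - b) / (a + b) ≤ (a - b) / a := by
      rw [div_le_div_iff₀ hab' ha]
      nlinarith [mul_nonneg hab.le hb.le]
    have hq2t : (a - b) / a ≤ 2 * ((a - b) / (a + b)) := by
      rw [show 2 * ((a - b) / (a + b)) = (2 * (a - b)) / (a + b) by ring,
        div_le_div_iff₀ ha hab']
      nlinarith [mul_nonneg hab.le hab.le]
    have core := picone_core hp ht0 ht1 htq hq1 hq2t hm0 hmM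
    have hap : (0:ℝ) < a ^ (p - 1) := Real.rpow_pos_of_pos ha _
    have hbp : (0:ℝ) < b ^ (p - 1) := Real.rpow_pos_of_pos hb _
    have h1 : c ^ p / a ^ (p - 1) - d ^ p / b ^ (p - 1)
        ≤ (max c d) ^ p / a ^ (p - 1) - (min c d) ^ p / b ^ (p - 1) := by
      have i1 : c ^ p ≤ (max c d) ^ p :=
        Real.rpow_le_rpow hc (le_max_left c d) (by linarith)
      have i2 : (min c d) ^ p ≤ d ^ p :=
        Real.rpow_le_rpow hm0 (min_le_right c d) (by linarith)
      have j1 : c ^ p / a ^ (p - 1) ≤ (max c d) ^ p / a ^ (p - 1) := by gcongr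
      have j2 : (min c d) ^ p / b ^ (p - 1) ≤ d ^ p / b ^ (p - 1) := by gcongr
      linarith
    have hT : (a - b) ^ (p - 1) * (c ^ p / a ^ (p - 1) - d ^ p / b ^ (p - 1))
        ≤ (a - b) ^ (p - 1) * ((max c d) ^ p / a ^ (p - 1) - (min c d) ^ p / b ^ (p - 1)) :=
      mul_le_mul_of_nonneg_left h1 (Real.rpow_nonneg hab.le _)
    have eqq : (a - b) ^ (p - 1) / a ^ (p - 1) = ((a - b) / a) ^ (p - 1) :=
      (Real.div_rpow hab.le ha.le _).symm
    have e8 : (a - b) ^ (p - 1) / b ^ (p - 1) = ((a - b) / b) ^ (p - 1) :=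
      (Real.div_rpow hab.le hb.le _).symm
    have eq1 : (a - b) ^ (p - 1) * ((max c d) ^ p / a ^ (p - 1) - (min c d) ^ p / b ^ (p - 1))
        = (min c d) ^ p * (((a - b) / a) ^ (p - 1) - ((a - b) / b) ^ (p - 1))
          + ((a - b) / a) ^ (p - 1) * ((max c d) ^ p - (min c d) ^ p) := by
      rw [← eqq, ← e8]; field_simp; ring
    have h4 := rp_aux4 hp (show 0 < b / a from div_pos hb ha)
    have e5 : ((b / a) ^ (p - 1))⁻¹ = (a / b) ^ (p - 1) := by
      rw [← Real.inv_rpow (div_pos hb ha).le, inv_div]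
    have e6 : 1 + (p - 1) * (1 - b / a) = 1 + (p - 1) * ((a - b) / a) := by
      field_simp
    rw [e5, e6] at h4
    have e7 : ((a - b) / b) ^ (p - 1) = ((a - b) / a) ^ (p - 1) * (a / b) ^ (p - 1) := by
      rw [← Real.mul_rpow hq0.le (div_pos ha hb).le]
      congr 1
      field_simp
    have e9 : ((a - b) / a) ^ (p - 1) * ((a - b) / a) = ((a - b) / a) ^ p := by
      rw [← Real.rpow_add_one hq0.ne' (p - 1), show p - 1 + 1 = p by ring]
    have hX : ((a - b) / a) ^ (p - 1) - ((a - b) / b) ^ (p - 1)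
        ≤ -((p - 1) * ((a - b) / a) ^ p) := by
      have hmul := mul_le_mul_of_nonneg_left h4 (Real.rpow_nonneg hq0.le (p - 1))
      rw [e7]
      nlinarith [hmul, e9]
    have hmid : (min c d) ^ p * (((a - b) / a) ^ (p - 1) - ((a - b) / b) ^ (p - 1))
        ≤ (min c d) ^ p * (-((p - 1) * ((a - b) / a) ^ p)) :=
      mul_le_mul_of_nonneg_left hX (Real.rpow_nonneg hm0 _)
    have htqp : ((a - b) / (a + b)) ^ p ≤ ((a - b) / a) ^ p :=
      Real.rpow_le_rpow ht0.le htq (by linarith)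
    have hlast : (min c d) ^ p * (-((p - 1) * ((a - b) / a) ^ p))
        ≤ -((p - 1) * (((a - b) / (a + b)) ^ p * (min c d) ^ p)) := by
      nlinarith [mul_le_mul_of_nonneg_left htqp
        (mul_nonneg hp1.le (Real.rpow_nonneg hm0 p))]
    rw [eT, eAbs, hsum, habs]
    rw [eq1] at hT
    linarith [core, hT, hmid, hlast]

theorem picone_with_remainder (p : ℝ) (hp : 1 < p) :
    ∃ C₁ > 0, ∃ C₂ > 0, ∀ a b c d : ℝ, 0 < a → 0 < b → 0 ≤ c → 0 ≤ d →
      |a - b| ^ (p - 2) * (a - b) * (c ^ p / a ^ (p - 1) - d ^ p / b ^ (p - 1)) +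
          C₁ * |(a - b) / (a + b)| ^ p * (c ^ p + d ^ p) ≤
        C₂ * |c - d| ^ p := by
  refine ⟨picC1 p, picC1_pos hp, picC2 p, picC2_pos hp, fun a b c d ha hb hc hd => ?_⟩
  rcases le_total b a with h | h
  · exact picone_key hp ha hb hc hd h
  · have key := picone_key hp hb ha hd hc h
    have e1 : |b - a| = |a - b| := abs_sub_comm b a
    have e2 : |d - c| = |c - d| := abs_sub_comm d c
    have e3 : |(b - a) / (b + a)| = |(a - b) / (a + b)| := by
      rw [show (b - a) / (b + a) = -((a - b) / (a + b)) by rw [add_comm b a]; ring, abs_neg]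
    rw [e1, e2, e3] at key
    linarith [key]
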